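/- Let G be a group acting by isometries on a geodesic metric space X and suppose h ∈ G admits a system of checkpoints (so h is an über-contraction). Then h is a strongly contracting isometry: there is C ≥ 0 such that every ball disjoint from Λ = ⋃_{i∈ℤ} hⁱS projects on Λ to a set of diameter at most C. -/
import Mathlib


/-- A geodesic segment from `x` to `y`, parametrized by arclength on `[0, d(x,y)]`. -/
def GeodSegment {X : Type*} [MetricSpace X] (γ : ℝ → X) (x y : X) : Prop :=
  γ 0 = x ∧ γ (dist x y) = y ∧
    ∀ s ∈ Set.Icc (0 : ℝ) (dist x y), ∀ t ∈ Set.Icc (0 : ℝ) (dist x y),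
      dist (γ s) (γ t) = |s - t|

def IsGeodesicMetricSpace (X : Type*) [MetricSpace X] : Prop :=
  ∀ x y : X, ∃ γ : ℝ → X, GeodSegment γ x y

/-- An über-contracting isometry (one admitting a system of checkpoints) is
strongly contracting: balls disjoint from `Λ = ⋃ᵢ hⁱS` project to sets of
uniformly bounded diameter. -/
theorem uber_contraction_is_strongly_contracting {G X : Type*} [Group G]
    [MetricSpace X] [MulAction G X]
    (hiso : ∀ (k : G) (p q : X), dist (k • p) (k • q) = dist p q)
    (hgeo : IsGeodesicMetricSpace X)
    (h : G) (S : Set X) (hSfin : S.Finite) (hSne : S.Nonempty)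
    (Λ : Set X) (hΛ : Λ = ⋃ i : ℤ, (fun p => h ^ i • p) '' S)
    -- `h` has quasi-isometrically embedded orbits
    (hqi : ∃ K₀ L₀ : ℝ, 1 ≤ K₀ ∧ 0 ≤ L₀ ∧ ∀ x : X, ∀ m n : ℤ,
      (1 / K₀) * |(m : ℝ) - n| - L₀ ≤ dist (h ^ m • x) (h ^ n • x) ∧
      dist (h ^ m • x) (h ^ n • x) ≤ K₀ * |(m : ℝ) - n| + L₀)
    -- closest-point projections on `Λ` exist
    (hproj : ∀ z : X, ∃ p ∈ Λ, dist z p = Metric.infDist z Λ)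
    -- `f : Λ → ℝ` is a quasi-isometry
    (f : X → ℝ) (K : ℝ) (hK : 1 ≤ K) (L' : ℝ) (hL' : 0 ≤ L')
    (hfqi : ∀ p ∈ Λ, ∀ q ∈ Λ,
      (1 / K) * dist p q - L' ≤ |f p - f q| ∧ |f p - f q| ≤ K * dist p q + L')
    (hfonto : ∀ t : ℝ, ∃ p ∈ Λ, |f p - t| ≤ L')
    -- checkpoint condition with error constant `L`
    (L : ℝ) (hL : 0 ≤ L)
    (hcheck : ∀ x y x' y' : X,
      x' ∈ Λ → dist x x' = Metric.infDist x Λ →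
      y' ∈ Λ → dist y y' = Metric.infDist y Λ →
      ∀ i : ℤ,
        -- `hⁱS` coarsely separates `x'` and `y'`
        ((∀ s ∈ S, f x' < f (h ^ i • s) ∧ f (h ^ i • s) < f y') ∨
         (∀ s ∈ S, f y' < f (h ^ i • s) ∧ f (h ^ i • s) < f x')) →
        -- `hⁱS` is at distance at least `L` from `x'` and `y'`
        (∀ s ∈ S, L ≤ dist x' (h ^ i • s)) →
        (∀ s ∈ S, L ≤ dist y' (h ^ i • s)) →
        ∀ γ : ℝ → X, GeodSegment γ x y →
          ∃ t ∈ Set.Icc (0 : ℝ) (dist x y), γ t ∈ (fun p => h ^ i • p) '' S) :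
    ∃ C : ℝ, 0 ≤ C ∧ ∀ (c : X) (ρ : ℝ), Metric.closedBall c ρ ∩ Λ = ∅ →
      Metric.diam {p : X | ∃ z ∈ Metric.closedBall c ρ,
        p ∈ Λ ∧ dist z p = Metric.infDist z Λ} ≤ C := by
  have hK0 : (0:ℝ) < K := lt_of_lt_of_le one_pos hK
  have hD0 : (0:ℝ) ≤ Metric.diam S := Metric.diam_nonneg
  have hKD : (0:ℝ) ≤ K * Metric.diam S := mul_nonneg hK0.le hD0
  have hKL : (0:ℝ) ≤ K * L := mul_nonneg hK0.le hL
  obtain ⟨M, hM⟩ : ∃ M : ℝ, M = 2 * (K * Metric.diam S + 2 * L' + (K * L + L')) + 1 := ⟨_, rfl⟩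
  have hM1 : 1 ≤ M := by rw [hM]; linarith
  have hΛmem : ∀ (j : ℤ), ∀ s ∈ S, h ^ j • s ∈ Λ := by
    intro j s hs
    rw [hΛ]
    exact Set.mem_iUnion.mpr ⟨j, ⟨s, hs, rfl⟩⟩
  have core : ∀ a b : X, a ∈ Λ → b ∈ Λ → f a < f b → M < f b - f a →
      ∃ i : ℤ, (∀ s ∈ S, f a < f (h ^ i • s) ∧ f (h ^ i • s) < f b) ∧
        (∀ s ∈ S, L ≤ dist a (h ^ i • s)) ∧ (∀ s ∈ S, L ≤ dist b (h ^ i • s)) := by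
    intro a b haΛ hbΛ hab hgap
    obtain ⟨lam, hlamΛ, hlam⟩ := hfonto ((f a + f b) / 2)
    have hlam' := hlamΛ
    rw [hΛ, Set.mem_iUnion] at hlam'
    obtain ⟨i, hi⟩ := hlam'
    rw [Set.mem_image] at hi
    obtain ⟨s₀, hs₀S, hs₀⟩ := hi
    have hs₀' : h ^ i • s₀ = lam := hs₀
    have hspread : ∀ s ∈ S, |f (h ^ i • s) - (f a + f b) / 2| ≤ K * Metric.diam S + 2 * L' := by
      intro s hs
      have h1 := (hfqi (h ^ i • s) (hΛmem i s hs) lam hlamΛ).2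
      have h2 : dist (h ^ i • s) lam ≤ Metric.diam S := by
        rw [← hs₀', hiso]
        exact Metric.dist_le_diam_of_mem hSfin.isBounded hs hs₀S
      have h3 : K * dist (h ^ i • s) lam ≤ K * Metric.diam S :=
        mul_le_mul_of_nonneg_left h2 hK0.le
      calc |f (h ^ i • s) - (f a + f b) / 2|
          ≤ |f (h ^ i • s) - f lam| + |f lam - (f a + f b) / 2| := abs_sub_le _ _ _
        _ ≤ K * Metric.diam S + 2 * L' := by linarith
    refine ⟨i, ?_, ?_, ?_⟩
    · intro s hs
      obtain ⟨h1, h2⟩ := abs_le.mp (hspread s hs)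
      constructor <;> linarith
    · intro s hs
      obtain ⟨h1, h2⟩ := abs_le.mp (hspread s hs)
      have h4 : K * L + L' ≤ f (h ^ i • s) - f a := by linarith
      have h5 : f (h ^ i • s) - f a ≤ |f a - f (h ^ i • s)| := by
        rw [abs_sub_comm]; exact le_abs_self _
      have h6 := (hfqi a haΛ (h ^ i • s) (hΛmem i s hs)).2
      have h7 : K * L ≤ K * dist a (h ^ i • s) := by linarith
      exact le_of_mul_le_mul_left h7 hK0
    · intro s hs
      obtain ⟨h1, h2⟩ := abs_le.mp (hspread s hs)
      have h4 : K * L + L' ≤ f b - f (h ^ i • s) := by linarith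
      have h5 : f b - f (h ^ i • s) ≤ |f b - f (h ^ i • s)| := le_abs_self _
      have h6 := (hfqi b hbΛ (h ^ i • s) (hΛmem i s hs)).2
      have h7 : K * L ≤ K * dist b (h ^ i • s) := by linarith
      exact le_of_mul_le_mul_left h7 hK0
  have hC0 : (0:ℝ) ≤ K * (2 * M + L') := mul_nonneg hK0.le (by linarith)
  refine ⟨K * (2 * M + L'), hC0, ?_⟩
  intro c ρ hdisj
  obtain ⟨r, hrΛ, hrc⟩ := hproj c
  have key : ∀ z ∈ Metric.closedBall c ρ, ∀ p, p ∈ Λ → dist z p = Metric.infDist z Λ →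
      |f p - f r| ≤ M := by
    intro z hz p hpΛ hpz
    by_contra hbig
    push_neg at hbig
    have hexi : ∃ i : ℤ,
        ((∀ s ∈ S, f p < f (h ^ i • s) ∧ f (h ^ i • s) < f r) ∨
         (∀ s ∈ S, f r < f (h ^ i • s) ∧ f (h ^ i • s) < f p)) ∧
        (∀ s ∈ S, L ≤ dist p (h ^ i • s)) ∧ (∀ s ∈ S, L ≤ dist r (h ^ i • s)) := by
      rcases lt_trichotomy (f p) (f r) with hlt | heq | hgt
      · have h' : M < f r - f p := by
          rwa [abs_sub_comm, abs_of_pos (by linarith)] at hbig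
        obtain ⟨i, h1, h2, h3⟩ := core p r hpΛ hrΛ hlt h'
        exact ⟨i, Or.inl h1, h2, h3⟩
      · rw [heq, sub_self, abs_zero] at hbig; linarith
      · have h' : M < f p - f r := by
          rwa [abs_of_pos (by linarith)] at hbig
        obtain ⟨i, h1, h2, h3⟩ := core r p hrΛ hpΛ hgt h'
        exact ⟨i, Or.inr h1, h3, h2⟩
    obtain ⟨i, hor, hdp, hdr⟩ := hexi
    obtain ⟨γ, hγ0, hγ1, hγd⟩ := hgeo z c
    obtain ⟨t, ht, hmem⟩ := hcheck z c p r hpΛ hpz hrΛ hrc i hor hdp hdr γ ⟨hγ0, hγ1, hγd⟩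
    have hγtΛ : γ t ∈ Λ := by
      obtain ⟨s, hsS, hst⟩ := hmem
      have hst' : h ^ i • s = γ t := hst
      rw [← hst']
      exact hΛmem i s hsS
    have hzc : dist z c ≤ ρ := Metric.mem_closedBall.mp hz
    have h1 := hγd t ht (dist z c) ⟨dist_nonneg, le_refl _⟩
    rw [hγ1] at h1
    have h2 : |t - dist z c| ≤ dist z c := by
      rw [abs_of_nonpos (by linarith [ht.2])]
      linarith [ht.1]
    have h3 : γ t ∈ Metric.closedBall c ρ := by
      rw [Metric.mem_closedBall, h1]
      linarith
    exact Set.eq_empty_iff_forall_notMem.mp hdisj (γ t) ⟨h3, hγtΛ⟩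
  apply Metric.diam_le_of_forall_dist_le hC0
  intro p hp q hq
  obtain ⟨z, hz, hpΛ, hpz⟩ := hp
  obtain ⟨w, hw, hqΛ, hqz⟩ := hq
  have e1 := key z hz p hpΛ hpz
  have e2 := key w hw q hqΛ hqz
  rw [abs_sub_comm] at e2
  have e3 : |f p - f q| ≤ 2 * M := by
    have := abs_sub_le (f p) (f r) (f q)
    linarith
  have e4 := (hfqi p hpΛ q hqΛ).1
  have e5 : 1 / K * dist p q ≤ 2 * M + L' := by linarith
  have e6 : K * (1 / K * dist p q) ≤ K * (2 * M + L') :=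
    mul_le_mul_of_nonneg_left e5 hK0.le
  have e7 : K * (1 / K * dist p q) = dist p q := by field_simp
  linarith
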